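/- Suppose e_0^+, e_1^+, e_0^−, e_1^−, K_0, K_0^{−1}, K_1, K_1^{−1} are elements of a unital associative 𝕂-algebra 𝒜 satisfying the Chevalley relations of U_q(ŝl_2). For i ∈ {0,1} define k_i = K_i, k_i^{−1} = K_i^{−1}, y_i^− = K_i^{−1} + e_i^−, and y_i^+ = K_i^{−1} − q(q − q^{−1})^2 K_i^{−1} e_i^+. Then the elements y_0^+, y_1^+, y_0^−, y_1^−, k_0, k_0^{−1}, k_1, k_1^{−1} satisfy the alternate relations. -/

import Mathlib

noncomputable section

open Submodule

variable {K : Type*} [Field K]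

/-- `[n]_q = (q^n − q^{−n})/(q − q^{−1})`. -/
def qInt (q : K) (n : ℤ) : K := (q ^ n - q ^ (-n)) / (q - q⁻¹)

/-- Elements `y₀⁺, y₁⁺, y₀⁻, y₁⁻, k₀, k₀⁻¹, k₁, k₁⁻¹` of a unital associative `K`-algebra
satisfy the alternate relations. -/
structure AlternateRelations (q : K) {A : Type*} [Ring A] [Algebra K A]
    (yp ym k kinv : Fin 2 → A) : Prop where
  k_kinv : ∀ i, k i * kinv i = 1
  kinv_k : ∀ i, kinv i * k i = 1
  central_yp : ∀ i, k 0 * k 1 * yp i = yp i * (k 0 * k 1)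
  central_ym : ∀ i, k 0 * k 1 * ym i = ym i * (k 0 * k 1)
  central_k : ∀ i, k 0 * k 1 * k i = k i * (k 0 * k 1)
  central_kinv : ∀ i, k 0 * k 1 * kinv i = kinv i * (k 0 * k 1)
  rel_yp_k : ∀ i, (q - q⁻¹)⁻¹ • (q • (yp i * k i) - q⁻¹ • (k i * yp i)) = 1
  rel_k_ym : ∀ i, (q - q⁻¹)⁻¹ • (q • (k i * ym i) - q⁻¹ • (ym i * k i)) = 1
  rel_ym_yp : ∀ i, (q - q⁻¹)⁻¹ • (q • (ym i * yp i) - q⁻¹ • (yp i * ym i)) = 1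
  rel_yp_ym : ∀ i j, i ≠ j →
    (q - q⁻¹)⁻¹ • (q • (yp i * ym j) - q⁻¹ • (ym j * yp i)) = kinv 0 * kinv 1
  serre_p : ∀ i j, i ≠ j →
    yp i ^ 3 * yp j - qInt q 3 • (yp i ^ 2 * yp j * yp i)
      + qInt q 3 • (yp i * yp j * yp i ^ 2) - yp j * yp i ^ 3 = 0
  serre_m : ∀ i j, i ≠ j →
    ym i ^ 3 * ym j - qInt q 3 • (ym i ^ 2 * ym j * ym i)
      + qInt q 3 • (ym i * ym j * ym i ^ 2) - ym j * ym i ^ 3 = 0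

/-- Elements `e₀⁺, e₁⁺, e₀⁻, e₁⁻, K₀, K₀⁻¹, K₁, K₁⁻¹` of a unital associative `K`-algebra
satisfy the Chevalley relations of `U_q(sl₂ hat)`. -/
structure ChevalleyRelations (q : K) {A : Type*} [Ring A] [Algebra K A]
    (ep em Kg Kginv : Fin 2 → A) : Prop where
  K_Kinv : ∀ i, Kg i * Kginv i = 1
  Kinv_K : ∀ i, Kginv i * Kg i = 1
  K_comm : Kg 0 * Kg 1 = Kg 1 * Kg 0
  KepK_same : ∀ i, Kg i * ep i * Kginv i = (q ^ (2 : ℤ)) • ep i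
  KemK_same : ∀ i, Kg i * em i * Kginv i = (q ^ (-2 : ℤ)) • em i
  KepK_diff : ∀ i j, i ≠ j → Kg i * ep j * Kginv i = (q ^ (-2 : ℤ)) • ep j
  KemK_diff : ∀ i j, i ≠ j → Kg i * em j * Kginv i = (q ^ (2 : ℤ)) • em j
  e_comm_same : ∀ i, ep i * em i - em i * ep i = (q - q⁻¹)⁻¹ • (Kg i - Kginv i)
  e_comm_diff : ∀ i j, i ≠ j → ep i * em j = em j * ep i
  serre_p : ∀ i j, i ≠ j →
    ep i ^ 3 * ep j - qInt q 3 • (ep i ^ 2 * ep j * ep i)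
      + qInt q 3 • (ep i * ep j * ep i ^ 2) - ep j * ep i ^ 3 = 0
  serre_m : ∀ i j, i ≠ j →
    em i ^ 3 * em j - qInt q 3 • (em i ^ 2 * em j * em i)
      + qInt q 3 • (em i * em j * em i ^ 2) - em j * em i ^ 3 = 0

variable {V : Type*} [AddCommGroup V] [Module K V]

/-- A decomposition of `V` of length `d`: nonzero subspaces `U 0, …, U d`
(indexed by `ℤ`, with `U i = ⊥` outside `[0, d]`) whose direct sum is `V`. -/
structure IsDecomposition (d : ℕ) (U : ℤ → Submodule K V) : Prop where
  bot_of_lt : ∀ i : ℤ, i < 0 → U i = ⊥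
  bot_of_gt : ∀ i : ℤ, (d : ℤ) < i → U i = ⊥
  ne_bot : ∀ i : ℤ, 0 ≤ i → i ≤ (d : ℤ) → U i ≠ ⊥
  indep : iSupIndep U
  sup_eq_top : ⨆ i, U i = ⊤

/-- `A, A*` is a tridiagonal pair on `V` with standard orderings `Vs 0, …, Vs d` and
`Vs' 0, …, Vs' d` of the eigenspaces of `A` resp. `A*`, with corresponding eigenvalues
`θ i` resp. `θ' i`. -/
structure IsTridiagonalPair (A A' : Module.End K V) (d : ℕ)
    (Vs Vs' : ℤ → Submodule K V) (θ θ' : ℤ → K) : Prop where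
  decompV : IsDecomposition d Vs
  decompV' : IsDecomposition d Vs'
  eig : ∀ i : ℤ, ∀ v ∈ Vs i, A v = θ i • v
  eig' : ∀ i : ℤ, ∀ v ∈ Vs' i, A' v = θ' i • v
  theta_inj : ∀ i j : ℤ, 0 ≤ i → i ≤ (d : ℤ) → 0 ≤ j → j ≤ (d : ℤ) → θ i = θ j → i = j
  theta'_inj : ∀ i j : ℤ, 0 ≤ i → i ≤ (d : ℤ) → 0 ≤ j → j ≤ (d : ℤ) → θ' i = θ' j → i = j
  trid : ∀ i : ℤ, (Vs i).map A' ≤ Vs (i - 1) ⊔ Vs i ⊔ Vs (i + 1)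
  trid' : ∀ i : ℤ, (Vs' i).map A ≤ Vs' (i - 1) ⊔ Vs' i ⊔ Vs' (i + 1)
  irred : ∀ W : Submodule K V, W.map A ≤ W → W.map A' ≤ W → W = ⊥ ∨ W = ⊤

/-- The sum `U m + U (m+1) + ⋯ + U n`. -/
def sumIcc (U : ℤ → Submodule K V) (m n : ℤ) : Submodule K V :=
  ⨆ j ∈ Set.Icc m n, U j

/-- Decomposition `[0D]`: the `i`-th subspace is `V_i`. -/
def dec0D (Vs : ℤ → Submodule K V) : ℤ → Submodule K V := Vs

/-- Decomposition `[0*D*]`: the `i`-th subspace is `V*_i`. -/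
def dec0sDs (Vs' : ℤ → Submodule K V) : ℤ → Submodule K V := Vs'

/-- Decomposition `[0*D]`: the `i`-th subspace is `(V*_0+⋯+V*_i) ∩ (V_i+⋯+V_d)`. -/
def dec0sD (d : ℕ) (Vs Vs' : ℤ → Submodule K V) (i : ℤ) : Submodule K V :=
  sumIcc Vs' 0 i ⊓ sumIcc Vs i (d : ℤ)

/-- Decomposition `[0*0]`: the `i`-th subspace is `(V*_0+⋯+V*_i) ∩ (V_0+⋯+V_{d−i})`. -/
def dec0s0 (d : ℕ) (Vs Vs' : ℤ → Submodule K V) (i : ℤ) : Submodule K V :=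
  sumIcc Vs' 0 i ⊓ sumIcc Vs 0 ((d : ℤ) - i)

/-- Decomposition `[D*0]`: the `i`-th subspace is `(V*_{d−i}+⋯+V*_d) ∩ (V_0+⋯+V_{d−i})`. -/
def decDs0 (d : ℕ) (Vs Vs' : ℤ → Submodule K V) (i : ℤ) : Submodule K V :=
  sumIcc Vs' ((d : ℤ) - i) (d : ℤ) ⊓ sumIcc Vs 0 ((d : ℤ) - i)

/-- Decomposition `[D*D]`: the `i`-th subspace is `(V*_{d−i}+⋯+V*_d) ∩ (V_i+⋯+V_d)`. -/
def decDsD (d : ℕ) (Vs Vs' : ℤ → Submodule K V) (i : ℤ) : Submodule K V :=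
  sumIcc Vs' ((d : ℤ) - i) (d : ℤ) ⊓ sumIcc Vs i (d : ℤ)


section SerreTransfer

variable {K : Type*} [Field K] {A : Type*} [Ring A] [Algebra K A]

set_option maxHeartbeats 1600000 in
lemma serre_m_abstract (u v : K) (huv : u * v = 1) (a b x y : A)
    (hxa : x * a = v • (a * x)) (hya : y * a = u • (a * y))
    (hxb : x * b = u • (b * x)) (hyb : y * b = v • (b * y))
    (hba : b * a = a * b)
    (hs : x ^ 3 * y - (u + 1 + v) • (x ^ 2 * y * x) + (u + 1 + v) • (x * y * x ^ 2)
      - y * x ^ 3 = 0) :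
    (a + x) ^ 3 * (b + y) - (u + 1 + v) • ((a + x) ^ 2 * (b + y) * (a + x))
      + (u + 1 + v) • ((a + x) * (b + y) * (a + x) ^ 2) - (b + y) * (a + x) ^ 3 = 0 := by
  have p3 : ∀ z : A, z ^ 3 = z * (z * z) := fun z => by
    rw [show (3:ℕ) = 2 + 1 by rfl, pow_succ, show (2:ℕ) = 1 + 1 by rfl, pow_succ, pow_one,
      mul_assoc]
  have p2 : ∀ z : A, z ^ 2 = z * z := fun z => by
    rw [show (2:ℕ) = 1 + 1 by rfl, pow_succ, pow_one]
  have ext : ∀ (s : K) (x' k : A), x' * k = s • (k * x') →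
      ∀ z, x' * (k * z) = s • (k * (x' * z)) := by
    intro s x' k hh z; rw [← mul_assoc, hh, smul_mul_assoc, mul_assoc]
  have hxa' := ext _ _ _ hxa
  have hya' := ext _ _ _ hya
  have hxb' := ext _ _ _ hxb
  have hyb' := ext _ _ _ hyb
  have hba' : ∀ z, b * (a * z) = a * (b * z) := fun z => by rw [← mul_assoc, hba, mul_assoc]
  have h := hs
  simp only [p3, p2, mul_assoc] at h
  have h1 : x * (x * (x * y)) = (u + 1 + v) • (x * (x * (y * x)))
      - (u + 1 + v) • (x * (y * (x * x))) + y * (x * (x * x)) := by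
    rw [← sub_eq_zero, ← h]; module
  have h2 : ∀ z, x * (x * (x * (y * z))) = (u + 1 + v) • (x * (x * (y * (x * z))))
      - (u + 1 + v) • (x * (y * (x * (x * z)))) + y * (x * (x * (x * z))) := by
    intro z
    have := congrArg (· * z) h1
    simpa only [smul_mul_assoc, sub_mul, add_mul, mul_assoc] using this
  simp only [p3, p2, mul_add, add_mul, mul_sub, sub_mul, smul_add, smul_sub, smul_smul,
    smul_mul_assoc, mul_smul_comm, mul_assoc, h1, h2, hxa, hxa', hya, hya', hxb, hxb',
    hyb, hyb', hba, hba']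
  have hvu : v * u = 1 := by rw [mul_comm]; exact huv
  have red1 : ∀ w : K, u * (v * w) = w := fun w => by rw [← mul_assoc, huv, one_mul]
  have red2 : ∀ w : K, v * (u * w) = w := fun w => by rw [← mul_assoc, hvu, one_mul]
  match_scalars <;>
    (try simp only [mul_comm, mul_left_comm, mul_assoc, huv, hvu, red1, red2, mul_one, one_mul]) <;>
    (try ring1)

set_option maxHeartbeats 1600000 in
lemma serre_p_abstract (u v : K) (huv : u * v = 1) (a b x y : A)
    (hxa : x * a = u • (a * x)) (hya : y * a = v • (a * y))
    (hxb : x * b = v • (b * x)) (hyb : y * b = u • (b * y))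
    (hba : b * a = a * b)
    (hs : x ^ 3 * y - (u + 1 + v) • (x ^ 2 * y * x) + (u + 1 + v) • (x * y * x ^ 2)
      - y * x ^ 3 = 0) :
    (a - a * x) ^ 3 * (b - b * y) - (u + 1 + v) • ((a - a * x) ^ 2 * (b - b * y) * (a - a * x))
      + (u + 1 + v) • ((a - a * x) * (b - b * y) * (a - a * x) ^ 2)
      - (b - b * y) * (a - a * x) ^ 3 = 0 := by
  have p3 : ∀ z : A, z ^ 3 = z * (z * z) := fun z => by
    rw [show (3:ℕ) = 2 + 1 by rfl, pow_succ, show (2:ℕ) = 1 + 1 by rfl, pow_succ, pow_one,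
      mul_assoc]
  have p2 : ∀ z : A, z ^ 2 = z * z := fun z => by
    rw [show (2:ℕ) = 1 + 1 by rfl, pow_succ, pow_one]
  have ext : ∀ (s : K) (x' k : A), x' * k = s • (k * x') →
      ∀ z, x' * (k * z) = s • (k * (x' * z)) := by
    intro s x' k hh z; rw [← mul_assoc, hh, smul_mul_assoc, mul_assoc]
  have hxa' := ext _ _ _ hxa
  have hya' := ext _ _ _ hya
  have hxb' := ext _ _ _ hxb
  have hyb' := ext _ _ _ hyb
  have hba' : ∀ z, b * (a * z) = a * (b * z) := fun z => by rw [← mul_assoc, hba, mul_assoc]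
  have h := hs
  simp only [p3, p2, mul_assoc] at h
  have h1 : x * (x * (x * y)) = (u + 1 + v) • (x * (x * (y * x)))
      - (u + 1 + v) • (x * (y * (x * x))) + y * (x * (x * x)) := by
    rw [← sub_eq_zero, ← h]; module
  have h2 : ∀ z, x * (x * (x * (y * z))) = (u + 1 + v) • (x * (x * (y * (x * z))))
      - (u + 1 + v) • (x * (y * (x * (x * z)))) + y * (x * (x * (x * z))) := by
    intro z
    have := congrArg (· * z) h1
    simpa only [smul_mul_assoc, sub_mul, add_mul, mul_assoc] using this
  simp only [p3, p2, mul_add, add_mul, mul_sub, sub_mul, smul_add, smul_sub, smul_smul,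
    smul_mul_assoc, mul_smul_comm, mul_assoc, h1, h2, hxa, hxa', hya, hya', hxb, hxb',
    hyb, hyb', hba, hba']
  have hvu : v * u = 1 := by rw [mul_comm]; exact huv
  have red1 : ∀ w : K, u * (v * w) = w := fun w => by rw [← mul_assoc, huv, one_mul]
  have red2 : ∀ w : K, v * (u * w) = w := fun w => by rw [← mul_assoc, hvu, one_mul]
  match_scalars <;>
    (try simp only [mul_comm, mul_left_comm, mul_assoc, huv, hvu, red1, red2, mul_one, one_mul]) <;>
    (try ring1)

end SerreTransfer

set_option maxHeartbeats 1600000 in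
/-- the Chevalley generators give rise, via the indicated change of
generators, to elements satisfying the alternate relations. -/
theorem stmt0 {K : Type*} [Field K] [IsAlgClosed K] (q : K) (hq0 : q ≠ 0)
    (hq : ∀ n : ℕ, 0 < n → q ^ n ≠ 1)
    {A : Type*} [Ring A] [Algebra K A] (ep em Kg Kginv : Fin 2 → A)
    (h : ChevalleyRelations q ep em Kg Kginv) :
    AlternateRelations q
      (fun i => Kginv i - (q * (q - q⁻¹) ^ 2) • (Kginv i * ep i))
      (fun i => Kginv i + em i)
      Kg Kginv := by
    -- scalar facts
  have hqq : q - q⁻¹ ≠ 0 := by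
    intro hcon
    have hq1 : q = q⁻¹ := sub_eq_zero.mp hcon
    have h2 : q ^ 2 = 1 := by
      rw [pow_two]; nth_rewrite 2 [hq1]; exact mul_inv_cancel₀ hq0
    exact hq 2 (by norm_num) h2
  have huu : (q * q) ≠ 0 := mul_ne_zero hq0 hq0
  have huv : (q * q) * (q * q)⁻¹ = 1 := mul_inv_cancel₀ huu
  have hqm1 : q * q - 1 ≠ 0 := by
    intro hcon
    exact hq 2 (by norm_num) (by rw [pow_two]; exact sub_eq_zero.mp hcon)
  have hqm1' : q ^ 2 - 1 ≠ 0 := by rw [pow_two]; exact hqm1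
  have hz2 : (q : K) ^ (2 : ℤ) = q * q := by
    rw [show (2:ℤ) = 1 + 1 by rfl, zpow_add₀ hq0, zpow_one]
  have hzm2 : (q : K) ^ (-2 : ℤ) = (q * q)⁻¹ := by
    rw [show (-2:ℤ) = -(2:ℤ) by rfl, zpow_neg, hz2]
  have hq3 : qInt q 3 = q * q + 1 + (q * q)⁻¹ := by
    unfold qInt
    rw [show (3:ℤ) = 1 + 1 + 1 by rfl, show (-(1+1+1) : ℤ) = -1 + -1 + -1 by rfl,
      zpow_add₀ hq0, zpow_add₀ hq0, zpow_add₀ hq0, zpow_add₀ hq0, zpow_one,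
      show ((-1:ℤ)) = -(1:ℤ) by rfl, zpow_neg, zpow_one, div_eq_iff hqq]
    field_simp
    ring
  -- generic manipulation helpers
  have mulL : ∀ (g gi e : A) (s : K), gi * g = 1 → g * e * gi = s • e →
      e * gi = s • (gi * e) := by
    intro g gi e s h1 h2
    have h3 := congrArg (gi * ·) h2
    simp only [← mul_assoc, h1, one_mul, mul_smul_comm] at h3
    exact h3
  have mulR : ∀ (g gi e : A) (s : K), gi * g = 1 → g * e * gi = s • e →
      g * e = s • (e * g) := by
    intro g gi e s h1 h2
    have h3 := congrArg (· * g) h2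
    simp only [mul_assoc, h1, mul_one, smul_mul_assoc] at h3
    exact h3
  have flip : ∀ (e k : A) (s : K), s ≠ 0 → k * e = s • (e * k) → e * k = s⁻¹ • (k * e) := by
    intro e k s hs hh; rw [hh, inv_smul_smul₀ hs]
  have ext : ∀ (s : K) (x' k : A), x' * k = s • (k * x') →
      ∀ z, x' * (k * z) = s • (k * (x' * z)) := by
    intro s x' k hh z; rw [← mul_assoc, hh, smul_mul_assoc, mul_assoc]
  have extC : ∀ (x' k : A), x' * k = k * x' → ∀ z, x' * (k * z) = k * (x' * z) := by
    intro x' k hh z; rw [← mul_assoc, hh, mul_assoc]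
  have extOne : ∀ (x' k : A), x' * k = 1 → ∀ z, x' * (k * z) = z := by
    intro x' k hh z; rw [← mul_assoc, hh, one_mul]
  -- commutation rules, Kginv versions
  have r1 : ∀ i, ep i * Kginv i = (q*q) • (Kginv i * ep i) := fun i => by
    have h0 := mulL _ _ _ _ (h.Kinv_K i) (h.KepK_same i); rwa [hz2] at h0
  have r2 : ∀ i, em i * Kginv i = (q*q)⁻¹ • (Kginv i * em i) := fun i => by
    have h0 := mulL _ _ _ _ (h.Kinv_K i) (h.KemK_same i); rwa [hzm2] at h0
  have r3 : ∀ i j, i ≠ j → ep j * Kginv i = (q*q)⁻¹ • (Kginv i * ep j) := fun i j hij => by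
    have h0 := mulL _ _ _ _ (h.Kinv_K i) (h.KepK_diff i j hij); rwa [hzm2] at h0
  have r4 : ∀ i j, i ≠ j → em j * Kginv i = (q*q) • (Kginv i * em j) := fun i j hij => by
    have h0 := mulL _ _ _ _ (h.Kinv_K i) (h.KemK_diff i j hij); rwa [hz2] at h0
  -- commutation rules, Kg versions
  have g1 : ∀ i, ep i * Kg i = (q*q)⁻¹ • (Kg i * ep i) := fun i => by
    have h0 := mulR _ _ _ _ (h.Kinv_K i) (h.KepK_same i); rw [hz2] at h0
    exact flip _ _ _ huu h0
  have g2 : ∀ i, em i * Kg i = (q*q) • (Kg i * em i) := fun i => by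
    have h0 := mulR _ _ _ _ (h.Kinv_K i) (h.KemK_same i); rw [hzm2] at h0
    have h1 := flip _ _ _ (inv_ne_zero huu) h0; rwa [inv_inv] at h1
  have g3 : ∀ i j, i ≠ j → ep j * Kg i = (q*q) • (Kg i * ep j) := fun i j hij => by
    have h0 := mulR _ _ _ _ (h.Kinv_K i) (h.KepK_diff i j hij); rw [hzm2] at h0
    have h1 := flip _ _ _ (inv_ne_zero huu) h0; rwa [inv_inv] at h1
  have g4 : ∀ i j, i ≠ j → em j * Kg i = (q*q)⁻¹ • (Kg i * em j) := fun i j hij => by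
    have h0 := mulR _ _ _ _ (h.Kinv_K i) (h.KemK_diff i j hij); rw [hz2] at h0
    exact flip _ _ _ huu h0
  -- K-block commutations
  have hc : ∀ (p pi r : A), p * pi = 1 → pi * p = 1 → p * r = r * p → pi * r = r * pi := by
    intro p pi r h1 h2 h5
    calc pi * r = pi * r * (p * pi) := by rw [h1, mul_one]
      _ = pi * (r * p) * pi := by rw [← mul_assoc, mul_assoc pi r p]
      _ = pi * (p * r) * pi := by rw [h5]
      _ = r * pi := by rw [← mul_assoc, h2, one_mul]
  have c1 : Kg 1 * Kg 0 = Kg 0 * Kg 1 := h.K_comm.symm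
  have c2 : Kg 1 * Kginv 0 = Kginv 0 * Kg 1 :=
    (hc (Kg 0) (Kginv 0) (Kg 1) (h.K_Kinv 0) (h.Kinv_K 0) h.K_comm).symm
  have c3 : Kginv 1 * Kg 0 = Kg 0 * Kginv 1 :=
    hc (Kg 1) (Kginv 1) (Kg 0) (h.K_Kinv 1) (h.Kinv_K 1) h.K_comm.symm
  have c4 : Kginv 1 * Kginv 0 = Kginv 0 * Kginv 1 :=
    hc (Kg 1) (Kginv 1) (Kginv 0) (h.K_Kinv 1) (h.Kinv_K 1) c2
  -- e-commutation
  have d1 : ∀ i, ep i * em i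
      = em i * ep i + (q - q⁻¹)⁻¹ • Kg i - (q - q⁻¹)⁻¹ • Kginv i := fun i => by
    have h0 := h.e_comm_same i
    rw [sub_eq_iff_eq_add] at h0
    rw [h0]; module
  have extd1 : ∀ i z, ep i * (em i * z)
      = em i * (ep i * z) + (q - q⁻¹)⁻¹ • (Kg i * z) - (q - q⁻¹)⁻¹ • (Kginv i * z) := by
    intro i z
    have h0 := congrArg (· * z) (d1 i)
    simpa only [add_mul, sub_mul, smul_mul_assoc, mul_assoc] using h0
  -- extended forms
  have r1' := fun i => ext _ _ _ (r1 i)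
  have r2' := fun i => ext _ _ _ (r2 i)
  have g1' := fun i => ext _ _ _ (g1 i)
  have g2' := fun i => ext _ _ _ (g2 i)
  have h01 : (0 : Fin 2) ≠ 1 := by decide
  have h10 : (1 : Fin 2) ≠ 0 := by decide
  have r3a := r3 0 1 h01
  have r3b := r3 1 0 h10
  have r4a := r4 0 1 h01
  have r4b := r4 1 0 h10
  have g3a := g3 0 1 h01
  have g3b := g3 1 0 h10
  have g4a := g4 0 1 h01
  have g4b := g4 1 0 h10
  have r3a' := ext _ _ _ r3a
  have r3b' := ext _ _ _ r3b
  have r4a' := ext _ _ _ r4a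
  have r4b' := ext _ _ _ r4b
  have g3a' := ext _ _ _ g3a
  have g3b' := ext _ _ _ g3b
  have g4a' := ext _ _ _ g4a
  have g4b' := ext _ _ _ g4b
  have c1' := extC _ _ c1
  have c2' := extC _ _ c2
  have c3' := extC _ _ c3
  have c4' := extC _ _ c4
  have kk' := fun i => extOne _ _ (h.K_Kinv i)
  have ki' := fun i => extOne _ _ (h.Kinv_K i)
  have d2a := h.e_comm_diff 0 1 h01
  have d2b := h.e_comm_diff 1 0 h10
  have d2a' := extC _ _ d2a
  have d2b' := extC _ _ d2b
  have kk := h.K_Kinv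
  have ki := h.Kinv_K
  -- serre hypotheses with rewritten coefficient
  have hspa := h.serre_p 0 1 h01
  have hspb := h.serre_p 1 0 h10
  have hsma := h.serre_m 0 1 h01
  have hsmb := h.serre_m 1 0 h10
  rw [hq3] at hspa hspb hsma hsmb
  -- scaled commutation and scaled serre
  have sc : ∀ (c s : K) (x k : A), x * k = s • (k * x) →
      (c • x) * k = s • (k * (c • x)) := by
    intro c s x k hh
    rw [smul_mul_assoc, hh, mul_smul_comm, smul_smul, smul_smul, mul_comm]
  have hsc : ∀ (c : K) (x y : A),
      (x ^ 3 * y - (q*q + 1 + (q*q)⁻¹) • (x ^ 2 * y * x)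
        + (q*q + 1 + (q*q)⁻¹) • (x * y * x ^ 2) - y * x ^ 3 = 0) →
      ((c • x) ^ 3 * (c • y) - (q*q + 1 + (q*q)⁻¹) • ((c • x) ^ 2 * (c • y) * (c • x))
        + (q*q + 1 + (q*q)⁻¹) • ((c • x) * (c • y) * (c • x) ^ 2)
        - (c • y) * (c • x) ^ 3 = 0) := by
    intro c x y hh
    have key : (c • x) ^ 3 * (c • y) - (q*q + 1 + (q*q)⁻¹) • ((c • x) ^ 2 * (c • y) * (c • x))
        + (q*q + 1 + (q*q)⁻¹) • ((c • x) * (c • y) * (c • x) ^ 2) - (c • y) * (c • x) ^ 3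
        = (c * c * c * c) • (x ^ 3 * y - (q*q + 1 + (q*q)⁻¹) • (x ^ 2 * y * x)
          + (q*q + 1 + (q*q)⁻¹) • (x * y * x ^ 2) - y * x ^ 3) := by
      simp only [smul_pow, smul_mul_assoc, mul_smul_comm, smul_smul, smul_sub, smul_add]
      match_scalars <;> ring1
    rw [key, hh, smul_zero]
  have habs : ∀ i, Kginv i - (q * (q - q⁻¹) ^ 2) • (Kginv i * ep i)
      = Kginv i - Kginv i * ((q * (q - q⁻¹) ^ 2) • ep i) := fun i => by
    rw [mul_smul_comm]
  refine ⟨h.K_Kinv, h.Kinv_K, ?_, ?_, ?_, ?_, ?_, ?_, ?_, ?_, ?_, ?_⟩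
  · -- central_yp
    intro i
    fin_cases i <;>
      · simp only [Fin.mk_zero, Fin.mk_one, mul_add, add_mul, mul_sub, sub_mul, smul_add, smul_sub, smul_smul,
          smul_mul_assoc, mul_smul_comm, mul_assoc, mul_one, one_mul,
          r1, r1', r2, r2', r3a, r3a', r3b, r3b', r4a, r4a', r4b, r4b',
          g1, g1', g2, g2', g3a, g3a', g3b, g3b', g4a, g4a', g4b, g4b',
          c1, c1', c2, c2', c3, c3', c4, c4', kk, kk', ki, ki',
          d1, extd1, d2a, d2a', d2b, d2b']
        all_goals (match_scalars <;> (try field_simp [hq0, hqq, hqm1]) <;> (try ring1))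
  · -- central_ym
    intro i
    fin_cases i <;>
      · simp only [Fin.mk_zero, Fin.mk_one, mul_add, add_mul, mul_sub, sub_mul, smul_add, smul_sub, smul_smul,
          smul_mul_assoc, mul_smul_comm, mul_assoc, mul_one, one_mul,
          r1, r1', r2, r2', r3a, r3a', r3b, r3b', r4a, r4a', r4b, r4b',
          g1, g1', g2, g2', g3a, g3a', g3b, g3b', g4a, g4a', g4b, g4b',
          c1, c1', c2, c2', c3, c3', c4, c4', kk, kk', ki, ki',
          d1, extd1, d2a, d2a', d2b, d2b']
        all_goals (match_scalars <;> (try field_simp [hq0, hqq, hqm1]) <;> (try ring1))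
  · -- central_k
    intro i
    fin_cases i <;>
      · simp only [Fin.mk_zero, Fin.mk_one, mul_add, add_mul, mul_assoc, mul_one, one_mul,
          c1, c1', c2, c2', c3, c3', c4, c4', kk, kk', ki, ki']
  · -- central_kinv
    intro i
    fin_cases i <;>
      · simp only [Fin.mk_zero, Fin.mk_one, mul_add, add_mul, mul_assoc, mul_one, one_mul,
          c1, c1', c2, c2', c3, c3', c4, c4', kk, kk', ki, ki']
  · -- rel_yp_k
    intro i
    fin_cases i <;>
      · simp only [Fin.mk_zero, Fin.mk_one, mul_add, add_mul, mul_sub, sub_mul, smul_add, smul_sub, smul_smul,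
          smul_mul_assoc, mul_smul_comm, mul_assoc, mul_one, one_mul,
          r1, r1', r2, r2', r3a, r3a', r3b, r3b', r4a, r4a', r4b, r4b',
          g1, g1', g2, g2', g3a, g3a', g3b, g3b', g4a, g4a', g4b, g4b',
          c1, c1', c2, c2', c3, c3', c4, c4', kk, kk', ki, ki',
          d1, extd1, d2a, d2a', d2b, d2b']
        all_goals (match_scalars <;> (try field_simp [hq0, hqq, hqm1, hqm1']) <;> (try ring1))
  · -- rel_k_ym
    intro i
    fin_cases i <;>
      · simp only [Fin.mk_zero, Fin.mk_one, mul_add, add_mul, mul_sub, sub_mul, smul_add, smul_sub, smul_smul,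
          smul_mul_assoc, mul_smul_comm, mul_assoc, mul_one, one_mul,
          r1, r1', r2, r2', r3a, r3a', r3b, r3b', r4a, r4a', r4b, r4b',
          g1, g1', g2, g2', g3a, g3a', g3b, g3b', g4a, g4a', g4b, g4b',
          c1, c1', c2, c2', c3, c3', c4, c4', kk, kk', ki, ki',
          d1, extd1, d2a, d2a', d2b, d2b']
        all_goals (match_scalars <;> (try field_simp [hq0, hqq, hqm1, hqm1']) <;> (try ring1))
  · -- rel_ym_yp
    intro i
    fin_cases i <;>
      · simp only [Fin.mk_zero, Fin.mk_one, mul_add, add_mul, mul_sub, sub_mul, smul_add, smul_sub, smul_smul,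
          smul_mul_assoc, mul_smul_comm, mul_assoc, mul_one, one_mul,
          r1, r1', r2, r2', r3a, r3a', r3b, r3b', r4a, r4a', r4b, r4b',
          g1, g1', g2, g2', g3a, g3a', g3b, g3b', g4a, g4a', g4b, g4b',
          c1, c1', c2, c2', c3, c3', c4, c4', kk, kk', ki, ki',
          d1, extd1, d2a, d2a', d2b, d2b']
        all_goals (match_scalars <;> (try field_simp [hq0, hqq, hqm1, hqm1']) <;> (try ring1))
  · -- rel_yp_ym
    intro i j hij
    fin_cases i <;> fin_cases j <;>
      first
        | exact absurd rfl hij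
        | · simp only [Fin.mk_zero, Fin.mk_one, mul_add, add_mul, mul_sub, sub_mul, smul_add, smul_sub, smul_smul,
              smul_mul_assoc, mul_smul_comm, mul_assoc, mul_one, one_mul,
              r1, r1', r2, r2', r3a, r3a', r3b, r3b', r4a, r4a', r4b, r4b',
              g1, g1', g2, g2', g3a, g3a', g3b, g3b', g4a, g4a', g4b, g4b',
              c1, c1', c2, c2', c3, c3', c4, c4', kk, kk', ki, ki',
              d1, extd1, d2a, d2a', d2b, d2b']
            all_goals (match_scalars <;> (try field_simp [hq0, hqq, hqm1, hqm1']) <;> (try ring1))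
  · -- serre_p
    intro i j hij
    fin_cases i <;> fin_cases j <;>
      first
        | exact absurd rfl hij
        | (simp only [Fin.mk_zero, Fin.mk_one, hq3, habs]
           first
             | exact serre_p_abstract (q*q) (q*q)⁻¹ huv (Kginv 0) (Kginv 1)
                 ((q * (q - q⁻¹) ^ 2) • ep 0) ((q * (q - q⁻¹) ^ 2) • ep 1)
                 (sc _ _ _ _ (r1 0)) (sc _ _ _ _ r3a) (sc _ _ _ _ r3b) (sc _ _ _ _ (r1 1))
                 c4 (hsc _ _ _ hspa)
             | exact serre_p_abstract (q*q) (q*q)⁻¹ huv (Kginv 1) (Kginv 0)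
                 ((q * (q - q⁻¹) ^ 2) • ep 1) ((q * (q - q⁻¹) ^ 2) • ep 0)
                 (sc _ _ _ _ (r1 1)) (sc _ _ _ _ r3b) (sc _ _ _ _ r3a) (sc _ _ _ _ (r1 0))
                 c4.symm (hsc _ _ _ hspb))
  · -- serre_m
    intro i j hij
    fin_cases i <;> fin_cases j <;>
      first
        | exact absurd rfl hij
        | (simp only [Fin.mk_zero, Fin.mk_one, hq3]
           first
             | exact serre_m_abstract (q*q) (q*q)⁻¹ huv (Kginv 0) (Kginv 1) (em 0) (em 1)
                 (r2 0) r4a r4b (r2 1) c4 hsma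
             | exact serre_m_abstract (q*q) (q*q)⁻¹ huv (Kginv 1) (Kginv 0) (em 1) (em 0)
                 (r2 1) r4b r4a (r2 0) c4.symm hsmb)
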